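/- Let X be a metric space, E, F Banach spaces, Ω ⊆ E open and convex, and Φ : Ω → F twice continuously differentiable with Lipschitz second derivative (Φ ∈ C^{2,1}). Then the composition operator C_Φ[f] := Φ ∘ f is continuously Fréchet differentiable from 𝒪^{0,α}(X,Ω) into C^{0,α}(X,F), with derivative given by (DC_Φ[f]·g)(x) = DΦ(f(x))·g(x). -/

import Mathlib

open ENNReal

/-- The `C^{0,α}`-norm (sup-norm plus `α`-Hölder seminorm), valued in `ℝ≥0∞`. -/
noncomputable def holderNorm {X E : Type*} [MetricSpace X] [NormedAddCommGroup E]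
    (α : ℝ) (f : X → E) : ℝ≥0∞ :=
  (⨆ x, (‖f x‖₊ : ℝ≥0∞)) +
    ⨆ x, ⨆ y, ⨆ _ : x ≠ y, (‖f x - f y‖₊ : ℝ≥0∞) / edist x y ^ α

/-- Membership in `𝒪^{0,α}(X, Ω)`. -/
def memO {X E : Type*} [MetricSpace X] [NormedAddCommGroup E]
    (α : ℝ) (Ω : Set E) (f : X → E) : Prop :=
  holderNorm α f < ⊤ ∧ (∀ x, f x ∈ Ω) ∧ ∃ ε > (0 : ℝ), ∀ x, ε ≤ Metric.infDist (f x) Ωᶜ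


open ENNReal

section PointwiseLemmas

variable {E F : Type*} [NormedAddCommGroup E] [NormedSpace ℝ E]
  [NormedAddCommGroup F] [NormedSpace ℝ F]
variable {Ω : Set E} {Φ : E → F} {Φ' : E → E →L[ℝ] F} {Φ'' : E → E →L[ℝ] E →L[ℝ] F}
  {L K : ℝ}

/-- norm bound on segment points -/
lemma seg_norm_le {b b₁ b₂ : E} {r : ℝ} (hb : b ∈ segment ℝ b₂ b₁)
    (h₂ : ‖b₂‖ ≤ r) (h₁ : ‖b₁‖ ≤ r) : ‖b‖ ≤ r := by
  obtain ⟨s, t, hs, ht, hst, rfl⟩ := hb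
  calc ‖s • b₂ + t • b₁‖ ≤ ‖s • b₂‖ + ‖t • b₁‖ := norm_add_le _ _
    _ = s * ‖b₂‖ + t * ‖b₁‖ := by
        rw [norm_smul, norm_smul, Real.norm_of_nonneg hs, Real.norm_of_nonneg ht]
    _ ≤ s * r + t * r := by nlinarith
    _ = r := by rw [← add_mul, hst, one_mul]

/-- derivative of `b ↦ Φ' (a + b)` -/
lemma hasFDerivAt_shift (hd2 : ∀ x ∈ Ω, HasFDerivAt Φ' (Φ'' x) x) {a b : E}
    (hmem : a + b ∈ Ω) : HasFDerivAt (fun v : E => Φ' (a + v)) (Φ'' (a + b)) b := by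
  have h1 : HasFDerivAt (fun v : E => a + v) (ContinuousLinearMap.id ℝ E) b := by
    simpa using (hasFDerivAt_id b).const_add a
  simpa [Function.comp_def] using (hd2 (a + b) hmem).comp b h1

/-- Lipschitz bound for `Φ'` along a segment `a + [b₂, b₁]`. -/
lemma lip2 (hd2 : ∀ x ∈ Ω, HasFDerivAt Φ' (Φ'' x) x)
    (hK : ∀ x ∈ Ω, ‖Φ'' x‖ ≤ K) {a b₁ b₂ : E} {r : ℝ}
    (hb₁ : ‖b₁‖ ≤ r) (hb₂ : ‖b₂‖ ≤ r) (hmem : ∀ v : E, ‖v‖ ≤ r → a + v ∈ Ω) :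
    ‖Φ' (a + b₁) - Φ' (a + b₂)‖ ≤ K * ‖b₁ - b₂‖ := by
  have := (convex_segment b₂ b₁).norm_image_sub_le_of_norm_hasFDerivWithin_le
    (f := fun v : E => Φ' (a + v)) (f' := fun v : E => Φ'' (a + v)) (C := K)
    (fun b hb => (hasFDerivAt_shift hd2 (hmem b (seg_norm_le hb hb₂ hb₁))).hasFDerivWithinAt)
    (fun b hb => hK _ (hmem b (seg_norm_le hb hb₂ hb₁)))
    (left_mem_segment ℝ b₂ b₁) (right_mem_segment ℝ b₂ b₁)
  simpa using this

/-- derivative of `b ↦ Φ (a + b)` -/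
lemma hasFDerivAt_shift0 (hd : ∀ x ∈ Ω, HasFDerivAt Φ (Φ' x) x) {a b : E}
    (hmem : a + b ∈ Ω) : HasFDerivAt (fun v : E => Φ (a + v)) (Φ' (a + b)) b := by
  have h1 : HasFDerivAt (fun v : E => a + v) (ContinuousLinearMap.id ℝ E) b := by
    simpa using (hasFDerivAt_id b).const_add a
  simpa [Function.comp_def] using (hd (a + b) hmem).comp b h1

/-- Taylor remainder bound for `Φ` between two perturbations of the same base point. -/
lemma psi_diff (hd : ∀ x ∈ Ω, HasFDerivAt Φ (Φ' x) x)
    (hd2 : ∀ x ∈ Ω, HasFDerivAt Φ' (Φ'' x) x)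
    (hK : ∀ x ∈ Ω, ‖Φ'' x‖ ≤ K) (hK0 : 0 ≤ K) {a b₁ b₂ : E} {r : ℝ}
    (hb₁ : ‖b₁‖ ≤ r) (hb₂ : ‖b₂‖ ≤ r) (hmem : ∀ v : E, ‖v‖ ≤ r → a + v ∈ Ω) :
    ‖Φ (a + b₁) - Φ (a + b₂) - Φ' a (b₁ - b₂)‖ ≤ K * r * ‖b₁ - b₂‖ := by
  have hr0 : (0:ℝ) ≤ r := (norm_nonneg b₁).trans hb₁
  have := (convex_segment b₂ b₁).norm_image_sub_le_of_norm_hasFDerivWithin_le'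
    (f := fun v : E => Φ (a + v)) (f' := fun v : E => Φ' (a + v)) (φ := Φ' a) (C := K * r)
    (fun b hb => (hasFDerivAt_shift0 hd (hmem b (seg_norm_le hb hb₂ hb₁))).hasFDerivWithinAt)
    (fun b hb => by
      have h1 : ‖Φ' (a + b) - Φ' (a + 0)‖ ≤ K * ‖b - 0‖ :=
        lip2 hd2 hK (seg_norm_le hb hb₂ hb₁) (by simpa using hr0) hmem
      simp only [add_zero, sub_zero] at h1
      calc ‖Φ' (a + b) - Φ' a‖ ≤ K * ‖b‖ := h1
        _ ≤ K * r := by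
            have := seg_norm_le hb hb₂ hb₁; nlinarith)
    (left_mem_segment ℝ b₂ b₁) (right_mem_segment ℝ b₂ b₁)
  simpa using this

/-- Taylor remainder bound for `Φ'` (using the Lipschitz property of `Φ''`). -/
lemma taylor_phi' (hd2 : ∀ x ∈ Ω, HasFDerivAt Φ' (Φ'' x) x)
    (hL : LipschitzOnWith (Real.toNNReal L) Φ'' Ω) {a b : E} {r : ℝ}
    (hb : ‖b‖ ≤ r) (hmem : ∀ v : E, ‖v‖ ≤ r → a + v ∈ Ω) :
    ‖Φ' (a + b) - Φ' a - Φ'' a b‖ ≤ max L 0 * r * ‖b‖ := by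
  have hr0 : (0:ℝ) ≤ r := (norm_nonneg b).trans hb
  have h0r : ‖(0:E)‖ ≤ r := by simpa using hr0
  have := (convex_segment (0:E) b).norm_image_sub_le_of_norm_hasFDerivWithin_le'
    (f := fun v : E => Φ' (a + v)) (f' := fun v : E => Φ'' (a + v)) (φ := Φ'' a)
    (C := max L 0 * r)
    (fun v hv => (hasFDerivAt_shift hd2 (hmem v (seg_norm_le hv h0r hb))).hasFDerivWithinAt)
    (fun v hv => by
      have hvr : ‖v‖ ≤ r := seg_norm_le hv h0r hb
      have h1 : dist (Φ'' (a + v)) (Φ'' a) ≤ Real.toNNReal L * dist (a + v) a :=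
        hL.dist_le_mul _ (hmem v hvr) _ (by simpa using hmem 0 h0r)
      simp only [dist_eq_norm] at h1
      have h2 : ‖a + v - a‖ = ‖v‖ := by congr 1; abel
      rw [h2, Real.coe_toNNReal'] at h1
      calc ‖Φ'' (a + v) - Φ'' a‖ ≤ max L 0 * ‖v‖ := (dist_eq_norm (Φ'' (a + v)) (Φ'' a)).symm.trans_le h1
        _ ≤ max L 0 * r := by
            have : (0:ℝ) ≤ max L 0 := le_max_right _ _
            nlinarith)
    (left_mem_segment ℝ (0:E) b) (right_mem_segment ℝ (0:E) b)
  simpa using this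

/-- derivative of `a ↦ Φ' a b` -/
lemma hasFDerivAt_eval (hd2 : ∀ x ∈ Ω, HasFDerivAt Φ' (Φ'' x) x) {a : E} (b : E)
    (hmem : a ∈ Ω) : HasFDerivAt (fun z : E => Φ' z b) ((Φ'' a).flip b) a := by
  have h := ((ContinuousLinearMap.apply ℝ F b).hasFDerivAt).comp a (hd2 a hmem)
  have he : (ContinuousLinearMap.apply ℝ F b).comp (Φ'' a) = (Φ'' a).flip b := by
    ext h; simp
  simpa [Function.comp_def, he] using h

/-- variation of the first-order Taylor remainder in the base point -/
lemma psi_a (hΩo : IsOpen Ω) (hd : ∀ x ∈ Ω, HasFDerivAt Φ (Φ' x) x)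
    (hd2 : ∀ x ∈ Ω, HasFDerivAt Φ' (Φ'' x) x)
    (hL : LipschitzOnWith (Real.toNNReal L) Φ'' Ω) {a₁ a₂ b : E} {r : ℝ}
    (hb : ‖b‖ ≤ r)
    (hmem : ∀ a ∈ segment ℝ a₂ a₁, ∀ v : E, ‖v‖ ≤ r → a + v ∈ Ω) :
    ‖Φ (a₁ + b) - Φ a₁ - Φ' a₁ b - (Φ (a₂ + b) - Φ a₂ - Φ' a₂ b)‖
      ≤ max L 0 * r * ‖b‖ * ‖a₁ - a₂‖ := by
  have hr0 : (0:ℝ) ≤ r := (norm_nonneg b).trans hb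
  have haΩ : ∀ a ∈ segment ℝ a₂ a₁, a ∈ Ω := fun a ha => by
    simpa using hmem a ha 0 (by simpa using hr0)
  have := (convex_segment a₂ a₁).norm_image_sub_le_of_norm_hasFDerivWithin_le
    (f := fun a : E => Φ (a + b) - Φ a - Φ' a b)
    (f' := fun a : E => Φ' (a + b) - Φ' a - (Φ'' a).flip b)
    (C := max L 0 * r * ‖b‖)
    (fun a ha => by
      have h1 : HasFDerivAt (fun a : E => Φ (a + b)) (Φ' (a + b)) a := by
        have hb1 : HasFDerivAt (fun z : E => z + b) (ContinuousLinearMap.id ℝ E) a := by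
          simpa using (hasFDerivAt_id a).add_const b
        simpa [Function.comp_def] using (hd (a + b) (hmem a ha b hb)).comp a hb1
      exact ((h1.sub (hd a (haΩ a ha))).sub (hasFDerivAt_eval hd2 b (haΩ a ha))).hasFDerivWithinAt)
    (fun a ha => by
      have hsym : ∀ v w : E, Φ'' a v w = Φ'' a w v := by
        intro v w
        refine second_derivative_symmetric_of_eventually (f := Φ) ?_ (hd2 a (haΩ a ha)) v w
        filter_upwards [hΩo.mem_nhds (haΩ a ha)] with y hy using hd y hy
      have heq : Φ' (a + b) - Φ' a - (Φ'' a).flip b = Φ' (a + b) - Φ' a - Φ'' a b := by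
        ext h; simp [hsym h b]
      show ‖Φ' (a + b) - Φ' a - (Φ'' a).flip b‖ ≤ max L 0 * r * ‖b‖
      rw [heq]
      exact taylor_phi' hd2 hL hb (hmem a ha))
    (left_mem_segment ℝ a₂ a₁) (right_mem_segment ℝ a₂ a₁)
  simpa using this

/-- variation of the increment of `Φ'` in the base point -/
lemma chi_a (hd2 : ∀ x ∈ Ω, HasFDerivAt Φ' (Φ'' x) x)
    (hL : LipschitzOnWith (Real.toNNReal L) Φ'' Ω) {a₁ a₂ b : E} {r : ℝ}
    (hb : ‖b‖ ≤ r)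
    (hmem : ∀ a ∈ segment ℝ a₂ a₁, ∀ v : E, ‖v‖ ≤ r → a + v ∈ Ω) :
    ‖Φ' (a₁ + b) - Φ' a₁ - (Φ' (a₂ + b) - Φ' a₂)‖ ≤ max L 0 * r * ‖a₁ - a₂‖ := by
  have hr0 : (0:ℝ) ≤ r := (norm_nonneg b).trans hb
  have haΩ : ∀ a ∈ segment ℝ a₂ a₁, a ∈ Ω := fun a ha => by
    simpa using hmem a ha 0 (by simpa using hr0)
  have := (convex_segment a₂ a₁).norm_image_sub_le_of_norm_hasFDerivWithin_le
    (f := fun a : E => Φ' (a + b) - Φ' a)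
    (f' := fun a : E => Φ'' (a + b) - Φ'' a)
    (C := max L 0 * r)
    (fun a ha => by
      have h1 : HasFDerivAt (fun a : E => Φ' (a + b)) (Φ'' (a + b)) a := by
        have hb1 : HasFDerivAt (fun z : E => z + b) (ContinuousLinearMap.id ℝ E) a := by
          simpa using (hasFDerivAt_id a).add_const b
        simpa [Function.comp_def] using (hd2 (a + b) (hmem a ha b hb)).comp a hb1
      exact (h1.sub (hd2 a (haΩ a ha))).hasFDerivWithinAt)
    (fun a ha => by
      have h1 : dist (Φ'' (a + b)) (Φ'' a) ≤ Real.toNNReal L * dist (a + b) a :=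
        hL.dist_le_mul _ (hmem a ha b hb) _ (haΩ a ha)
      simp only [dist_eq_norm] at h1
      have h2 : ‖a + b - a‖ = ‖b‖ := by congr 1; abel
      rw [h2, Real.coe_toNNReal'] at h1
      calc ‖Φ'' (a + b) - Φ'' a‖ ≤ max L 0 * ‖b‖ := (dist_eq_norm (Φ'' (a + b)) (Φ'' a)).symm.trans_le h1
        _ ≤ max L 0 * r := by
            have : (0:ℝ) ≤ max L 0 := le_max_right _ _
            nlinarith)
    (left_mem_segment ℝ a₂ a₁) (right_mem_segment ℝ a₂ a₁)
  simpa using this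

end PointwiseLemmas
section ENNRealHelpers

open ENNReal

lemma coe_nnnorm_le_ofReal {F : Type*} [NormedAddCommGroup F] {z : F} {m : ℝ} (h : ‖z‖ ≤ m) :
    (‖z‖₊ : ℝ≥0∞) ≤ ENNReal.ofReal m := by
  rw [← enorm_eq_nnnorm, ← ofReal_norm]; exact ENNReal.ofReal_le_ofReal h

variable {X E : Type*} [MetricSpace X] [NormedAddCommGroup E] {α : ℝ} {f : X → E}

lemma sup_le_holderNorm (x : X) : (‖f x‖₊ : ℝ≥0∞) ≤ holderNorm α f :=
  (le_iSup (fun x => (‖f x‖₊ : ℝ≥0∞)) x).trans le_self_add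

lemma sub_le_holderNorm (hα : 0 ≤ α) {x y : X} (hxy : x ≠ y) :
    (‖f x - f y‖₊ : ℝ≥0∞) ≤ holderNorm α f * edist x y ^ α := by
  have hne0 : edist x y ^ α ≠ 0 := (ENNReal.rpow_pos (edist_pos.mpr hxy) (edist_ne_top x y)).ne'
  have hnetop : edist x y ^ α ≠ ⊤ := ENNReal.rpow_ne_top_of_nonneg hα (edist_ne_top x y)
  have h1 : (‖f x - f y‖₊ : ℝ≥0∞) / edist x y ^ α ≤ holderNorm α f := by
    refine le_trans ?_ le_add_self
    exact le_iSup_of_le x (le_iSup_of_le y (le_iSup_of_le hxy le_rfl))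
  calc (‖f x - f y‖₊ : ℝ≥0∞) = (‖f x - f y‖₊ : ℝ≥0∞) / edist x y ^ α * edist x y ^ α :=
      (ENNReal.div_mul_cancel hne0 hnetop).symm
    _ ≤ holderNorm α f * edist x y ^ α := mul_le_mul_left h1 _

lemma holderNorm_le {cS cH : ℝ≥0∞} (h1 : ∀ x, (‖f x‖₊ : ℝ≥0∞) ≤ cS)
    (h2 : ∀ x y, x ≠ y → (‖f x - f y‖₊ : ℝ≥0∞) ≤ cH * edist x y ^ α) :
    holderNorm α f ≤ cS + cH := by
  refine add_le_add (iSup_le h1) (iSup_le fun x => iSup_le fun y => iSup_le fun hxy => ?_)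
  exact ENNReal.div_le_of_le_mul (h2 x y hxy)

end ENNRealHelpers
/-- if `Φ ∈ C^{2,1}(Ω, F)` on the open convex set `Ω`, then the composition
operator `C_Φ[f] := Φ ∘ f` is continuously Fréchet differentiable from `𝒪^{0,α}(X, Ω)` into
`C^{0,α}(X, F)`, with derivative `(DC_Φ[f]·g)(x) = DΦ(f(x))·g(x)`: the first-order Taylor
remainder is `o(‖g‖_{C^{0,α}})`, and `f ↦ DΦ ∘ f` is continuous in `C^{0,α}`-norm. -/
theorem composition_differentiable {X E F : Type*} [MetricSpace X]
    [NormedAddCommGroup E] [NormedSpace ℝ E] [CompleteSpace E]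
    [NormedAddCommGroup F] [NormedSpace ℝ F] [CompleteSpace F]
    (α : ℝ) (hα0 : 0 < α) (hα1 : α ≤ 1)
    (Ω : Set E) (hΩo : IsOpen Ω) (hΩc : Convex ℝ Ω)
    (Φ : E → F) (Φ' : E → E →L[ℝ] F) (Φ'' : E → E →L[ℝ] E →L[ℝ] F) (L K₁ K₂ : ℝ)
    (hd : ∀ x ∈ Ω, HasFDerivAt Φ (Φ' x) x)
    (hd2 : ∀ x ∈ Ω, HasFDerivAt Φ' (Φ'' x) x)
    (hL : LipschitzOnWith (Real.toNNReal L) Φ'' Ω)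
    (hK₁ : ∀ x ∈ Ω, ‖Φ' x‖ ≤ K₁) (hK₂ : ∀ x ∈ Ω, ‖Φ'' x‖ ≤ K₂) :
    ∀ f : X → E, memO α Ω f →
      -- Fréchet differentiability of `C_Φ` at `f`, with derivative `g ↦ (x ↦ Φ'(f x) (g x))`
      ((∀ ε : ℝ≥0∞, 0 < ε → ∃ δ : ℝ≥0∞, 0 < δ ∧
        ∀ g : X → E, memO α Ω (fun x => f x + g x) → holderNorm α g < δ →
          holderNorm α (fun x => Φ (f x + g x) - Φ (f x) - Φ' (f x) (g x))
            ≤ ε * holderNorm α g) ∧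
      -- continuity of the derivative assignment `f ↦ (x ↦ Φ'(f x))` in `C^{0,α}`-norm
      (∀ ε : ℝ≥0∞, 0 < ε → ∃ δ : ℝ≥0∞, 0 < δ ∧
        ∀ g : X → E, memO α Ω g → holderNorm α (fun x => g x - f x) < δ →
          holderNorm α (fun x => Φ' (g x) - Φ' (f x)) < ε)) := by
  intro f hf
  obtain ⟨hfN, hfΩ, ε₀, hε₀, hfd⟩ := hf
  set K₂' := max K₂ 0 with hK₂'def
  have hK₂'b : ∀ x ∈ Ω, ‖Φ'' x‖ ≤ K₂' := fun x hx => (hK₂ x hx).trans (le_max_left _ _)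
  have hK₂'0 : (0:ℝ) ≤ K₂' := le_max_right _ _
  have hL0 : (0:ℝ) ≤ max L 0 := le_max_right _ _
  set c : ℝ := ε₀ / 3 with hcdef
  have hc0 : (0:ℝ) < c := by positivity
  have hdeep : ∀ x, ∀ v : E, ‖v‖ ≤ 2 * c → f x + v ∈ Ω := by
    intro x v hv
    by_contra hvn
    have h1 : Metric.infDist (f x) Ωᶜ ≤ dist (f x) (f x + v) :=
      Metric.infDist_le_dist_of_mem hvn
    rw [dist_self_add_right] at h1
    have h2 := hfd x
    have : c = ε₀ / 3 := hcdef
    linarith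
  set S : Set E := {z : E | ∀ v : E, ‖v‖ ≤ 2 * c → z + v ∈ Ω} with hSdef
  have hSconv : Convex ℝ S := by
    intro z₁ hz₁ z₂ hz₂ s t hs ht hst v hv
    have h1 := hΩc (hz₁ v hv) (hz₂ v hv) hs ht hst
    have he : s • (z₁ + v) + t • (z₂ + v) = s • z₁ + t • z₂ + v := by
      have hv1 : s • v + t • v = v := by rw [← add_smul, hst, one_smul]
      calc s • (z₁ + v) + t • (z₂ + v) = s • z₁ + t • z₂ + (s • v + t • v) := by
            rw [smul_add, smul_add]; abel
        _ = s • z₁ + t • z₂ + v := by rw [hv1]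
    rw [he] at h1
    exact h1
  have hfS : ∀ x, f x ∈ S := fun x v hv => hdeep x v hv
  -- ENNReal constants
  set Nf := holderNorm α f with hNfdef
  set Kₑ : ℝ≥0∞ := ENNReal.ofReal K₂' with hKedef
  set Lₑ : ℝ≥0∞ := ENNReal.ofReal (max L 0) with hLedef
  have hKet : Kₑ ≠ ⊤ := ENNReal.ofReal_ne_top
  have hLet : Lₑ ≠ ⊤ := ENNReal.ofReal_ne_top
  have hfsub : ∀ x y : X, x ≠ y → (‖f x - f y‖₊ : ℝ≥0∞) ≤ Nf * edist x y ^ α :=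
    fun x y hxy => sub_le_holderNorm hα0.le hxy
  constructor
  · -- differentiability
    intro ε hε
    set C₀ : ℝ≥0∞ := 3 * Kₑ + Lₑ * Nf with hC₀def
    have hC₀t : C₀ ≠ ⊤ := by
      rw [hC₀def]
      exact ENNReal.add_ne_top.mpr
        ⟨ENNReal.mul_ne_top (by simp) hKet, ENNReal.mul_ne_top hLet hfN.ne⟩
    refine ⟨min (ENNReal.ofReal c) (ε / C₀),
      lt_min (ENNReal.ofReal_pos.mpr hc0) (ENNReal.div_pos hε.ne' hC₀t), ?_⟩
    intro g hgm hgδ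
    set Ng := holderNorm α g with hNgdef
    have hgc' : Ng ≤ ENNReal.ofReal c := le_of_lt (hgδ.trans_le (min_le_left _ _))
    have hgε : Ng ≤ ε / C₀ := le_of_lt (hgδ.trans_le (min_le_right _ _))
    have hgx : ∀ x, (‖g x‖₊ : ℝ≥0∞) ≤ Ng := fun x => sup_le_holderNorm x
    have hgsub : ∀ x y : X, x ≠ y → (‖g x - g y‖₊ : ℝ≥0∞) ≤ Ng * edist x y ^ α :=
      fun x y hxy => sub_le_holderNorm hα0.le hxy
    have hgc : ∀ x, ‖g x‖ ≤ c := by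
      intro x
      have h1 := (hgx x).trans hgc'
      rw [← enorm_eq_nnnorm, ← ofReal_norm] at h1
      exact (ENNReal.ofReal_le_ofReal_iff hc0.le).mp h1
    -- real pointwise bounds
    have hsupR : ∀ x, ‖Φ (f x + g x) - Φ (f x) - Φ' (f x) (g x)‖ ≤ K₂' * ‖g x‖ * ‖g x‖ := by
      intro x
      have h := psi_diff hd hd2 hK₂'b hK₂'0 (le_refl ‖g x‖)
        (by simpa using norm_nonneg (g x))
        (fun v hv => hfS x v (hv.trans (by linarith [hgc x])))
        (a := f x) (b₁ := g x) (b₂ := 0)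
      simpa using h
    have hholR : ∀ x y : X,
        ‖(Φ (f x + g x) - Φ (f x) - Φ' (f x) (g x))
          - (Φ (f y + g y) - Φ (f y) - Φ' (f y) (g y))‖
        ≤ max L 0 * ‖g x‖ * ‖g x‖ * ‖f x - f y‖
          + K₂' * (‖g x‖ + ‖g y‖) * ‖g x - g y‖ := by
      intro x y
      have hseg : segment ℝ (f y) (f x) ⊆ S := hSconv.segment_subset (hfS y) (hfS x)
      have h1 := psi_a hΩo hd hd2 hL (le_refl ‖g x‖)
        (fun a ha v hv => hseg ha v (hv.trans (by linarith [hgc x])))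
        (a₁ := f x) (a₂ := f y) (b := g x)
      have h2 := psi_diff hd hd2 hK₂'b hK₂'0 (b₁ := g x) (b₂ := g y)
        (r := ‖g x‖ + ‖g y‖) (a := f y)
        (by linarith [norm_nonneg (g y)]) (by linarith [norm_nonneg (g x)])
        (fun v hv => hfS y v (by linarith [hgc x, hgc y]))
      have hsplit : (Φ (f x + g x) - Φ (f x) - Φ' (f x) (g x))
          - (Φ (f y + g y) - Φ (f y) - Φ' (f y) (g y))
          = (Φ (f x + g x) - Φ (f x) - Φ' (f x) (g x)
              - (Φ (f y + g x) - Φ (f y) - Φ' (f y) (g x)))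
            + (Φ (f y + g x) - Φ (f y + g y) - Φ' (f y) (g x - g y)) := by
        rw [map_sub]; abel
      rw [hsplit]
      exact (norm_add_le _ _).trans (add_le_add h1 h2)
    -- ENNReal bounds
    have hsupE : ∀ x, (‖Φ (f x + g x) - Φ (f x) - Φ' (f x) (g x)‖₊ : ℝ≥0∞)
        ≤ Kₑ * (Ng * Ng) := by
      intro x
      refine (coe_nnnorm_le_ofReal (hsupR x)).trans ?_
      rw [ENNReal.ofReal_mul (mul_nonneg hK₂'0 (norm_nonneg _)), ENNReal.ofReal_mul hK₂'0]
      simp only [ofReal_norm, enorm_eq_nnnorm]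
      rw [← hKedef, mul_assoc]
      exact mul_le_mul' le_rfl (mul_le_mul' (hgx x) (hgx x))
    have hholE : ∀ x y : X, x ≠ y →
        (‖(Φ (f x + g x) - Φ (f x) - Φ' (f x) (g x))
          - (Φ (f y + g y) - Φ (f y) - Φ' (f y) (g y))‖₊ : ℝ≥0∞)
        ≤ ((Lₑ * Nf + 2 * Kₑ) * (Ng * Ng)) * edist x y ^ α := by
      intro x y hxy
      refine (coe_nnnorm_le_ofReal (hholR x y)).trans ?_
      have e1 : ENNReal.ofReal (max L 0 * ‖g x‖ * ‖g x‖ * ‖f x - f y‖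
          + K₂' * (‖g x‖ + ‖g y‖) * ‖g x - g y‖)
          = Lₑ * (‖g x‖₊ : ℝ≥0∞) * (‖g x‖₊ : ℝ≥0∞) * (‖f x - f y‖₊ : ℝ≥0∞)
            + Kₑ * ((‖g x‖₊ : ℝ≥0∞) + (‖g y‖₊ : ℝ≥0∞)) * (‖g x - g y‖₊ : ℝ≥0∞) := by
        rw [ENNReal.ofReal_add
            (mul_nonneg (mul_nonneg (mul_nonneg hL0 (norm_nonneg _)) (norm_nonneg _))
              (norm_nonneg _))
            (mul_nonneg (mul_nonneg hK₂'0 (add_nonneg (norm_nonneg _) (norm_nonneg _)))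
              (norm_nonneg _)),
          ENNReal.ofReal_mul (mul_nonneg (mul_nonneg hL0 (norm_nonneg _)) (norm_nonneg _)),
          ENNReal.ofReal_mul (mul_nonneg hL0 (norm_nonneg _)),
          ENNReal.ofReal_mul hL0,
          ENNReal.ofReal_mul (mul_nonneg hK₂'0 (add_nonneg (norm_nonneg _) (norm_nonneg _))),
          ENNReal.ofReal_mul hK₂'0,
          ENNReal.ofReal_add (norm_nonneg _) (norm_nonneg _)]
        simp only [ofReal_norm, enorm_eq_nnnorm]
        rfl
      rw [e1]
      calc Lₑ * (‖g x‖₊ : ℝ≥0∞) * (‖g x‖₊ : ℝ≥0∞) * (‖f x - f y‖₊ : ℝ≥0∞)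
            + Kₑ * ((‖g x‖₊ : ℝ≥0∞) + (‖g y‖₊ : ℝ≥0∞)) * (‖g x - g y‖₊ : ℝ≥0∞)
          ≤ Lₑ * Ng * Ng * (Nf * edist x y ^ α)
            + Kₑ * (Ng + Ng) * (Ng * edist x y ^ α) := by
            refine add_le_add ?_ ?_
            · exact mul_le_mul' (mul_le_mul' (mul_le_mul' le_rfl (hgx x)) (hgx x))
                (hfsub x y hxy)
            · exact mul_le_mul' (mul_le_mul' le_rfl (add_le_add (hgx x) (hgx y)))
                (hgsub x y hxy)
        _ = ((Lₑ * Nf + 2 * Kₑ) * (Ng * Ng)) * edist x y ^ α := by ring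
    have hfinal : holderNorm α
        (fun x => Φ (f x + g x) - Φ (f x) - Φ' (f x) (g x)) ≤ C₀ * (Ng * Ng) := by
      refine (holderNorm_le hsupE hholE).trans (le_of_eq ?_)
      rw [hC₀def]; ring
    calc holderNorm α (fun x => Φ (f x + g x) - Φ (f x) - Φ' (f x) (g x))
        ≤ C₀ * (Ng * Ng) := hfinal
      _ = (C₀ * Ng) * Ng := by ring
      _ ≤ (C₀ * (ε / C₀)) * Ng := mul_le_mul' (mul_le_mul' le_rfl hgε) le_rfl
      _ ≤ ε * Ng := mul_le_mul' ENNReal.mul_div_le le_rfl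
  · -- continuity of the derivative
    intro ε hε
    set C₁ : ℝ≥0∞ := 2 * Kₑ + Lₑ * Nf + 1 with hC₁def
    have hC₁t : C₁ ≠ ⊤ := by
      rw [hC₁def]
      exact ENNReal.add_ne_top.mpr
        ⟨ENNReal.add_ne_top.mpr
          ⟨ENNReal.mul_ne_top (by simp) hKet, ENNReal.mul_ne_top hLet hfN.ne⟩, by simp⟩
    have hC₁0 : C₁ ≠ 0 := by
      rw [hC₁def]
      exact (lt_of_lt_of_le zero_lt_one le_add_self).ne'
    refine ⟨min (ENNReal.ofReal c) (ε / C₁),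
      lt_min (ENNReal.ofReal_pos.mpr hc0) (ENNReal.div_pos hε.ne' hC₁t), ?_⟩
    intro g hgm hgδ
    set u : X → E := fun x => g x - f x with hudef
    have hgu : ∀ x, g x = f x + u x := fun x => by simp [hudef]
    set Nu := holderNorm α u with hNudef
    have huδ : Nu < min (ENNReal.ofReal c) (ε / C₁) := hgδ
    have hux : ∀ x, (‖u x‖₊ : ℝ≥0∞) ≤ Nu := fun x => sup_le_holderNorm x
    have husub : ∀ x y : X, x ≠ y → (‖u x - u y‖₊ : ℝ≥0∞) ≤ Nu * edist x y ^ α :=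
      fun x y hxy => sub_le_holderNorm hα0.le hxy
    have huc : ∀ x, ‖u x‖ ≤ c := by
      intro x
      have h1 := (hux x).trans (le_of_lt (huδ.trans_le (min_le_left _ _)))
      rw [← enorm_eq_nnnorm, ← ofReal_norm] at h1
      exact (ENNReal.ofReal_le_ofReal_iff hc0.le).mp h1
    have hsupR : ∀ x, ‖Φ' (g x) - Φ' (f x)‖ ≤ K₂' * ‖u x‖ := by
      intro x
      have h := lip2 hd2 hK₂'b (le_refl ‖u x‖) (by simpa using norm_nonneg (u x))
        (fun v hv => hfS x v (hv.trans (by linarith [huc x])))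
        (a := f x) (b₁ := u x) (b₂ := 0)
      rw [hgu x]
      simpa using h
    have hholR : ∀ x y : X, ‖(Φ' (g x) - Φ' (f x)) - (Φ' (g y) - Φ' (f y))‖
        ≤ max L 0 * ‖u x‖ * ‖f x - f y‖ + K₂' * ‖u x - u y‖ := by
      intro x y
      have hseg : segment ℝ (f y) (f x) ⊆ S := hSconv.segment_subset (hfS y) (hfS x)
      have h1 := chi_a hd2 hL (le_refl ‖u x‖)
        (fun a ha v hv => hseg ha v (hv.trans (by linarith [huc x])))
        (a₁ := f x) (a₂ := f y) (b := u x)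
      have h2 := lip2 hd2 hK₂'b (a := f y) (b₁ := u x) (b₂ := u y) (r := c)
        (huc x) (huc y) (fun v hv => hfS y v (by linarith))
      rw [hgu x, hgu y]
      have hsplit : (Φ' (f x + u x) - Φ' (f x)) - (Φ' (f y + u y) - Φ' (f y))
          = (Φ' (f x + u x) - Φ' (f x) - (Φ' (f y + u x) - Φ' (f y)))
            + (Φ' (f y + u x) - Φ' (f y + u y)) := by abel
      rw [hsplit]
      exact (norm_add_le _ _).trans (add_le_add h1 h2)
    have hsupE : ∀ x, (‖Φ' (g x) - Φ' (f x)‖₊ : ℝ≥0∞) ≤ Kₑ * Nu := by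
      intro x
      refine (coe_nnnorm_le_ofReal (hsupR x)).trans ?_
      rw [ENNReal.ofReal_mul hK₂'0, ofReal_norm, enorm_eq_nnnorm, ← hKedef]
      exact mul_le_mul' le_rfl (hux x)
    have hholE : ∀ x y : X, x ≠ y →
        (‖(Φ' (g x) - Φ' (f x)) - (Φ' (g y) - Φ' (f y))‖₊ : ℝ≥0∞)
        ≤ ((Lₑ * Nf + Kₑ) * Nu) * edist x y ^ α := by
      intro x y hxy
      refine (coe_nnnorm_le_ofReal (hholR x y)).trans ?_
      have e1 : ENNReal.ofReal (max L 0 * ‖u x‖ * ‖f x - f y‖ + K₂' * ‖u x - u y‖)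
          = Lₑ * (‖u x‖₊ : ℝ≥0∞) * (‖f x - f y‖₊ : ℝ≥0∞)
            + Kₑ * (‖u x - u y‖₊ : ℝ≥0∞) := by
        rw [ENNReal.ofReal_add
            (mul_nonneg (mul_nonneg hL0 (norm_nonneg _)) (norm_nonneg _))
            (mul_nonneg hK₂'0 (norm_nonneg _)),
          ENNReal.ofReal_mul (mul_nonneg hL0 (norm_nonneg _)), ENNReal.ofReal_mul hL0,
          ENNReal.ofReal_mul hK₂'0]
        simp only [ofReal_norm, enorm_eq_nnnorm]
        rfl
      rw [e1]
      calc Lₑ * (‖u x‖₊ : ℝ≥0∞) * (‖f x - f y‖₊ : ℝ≥0∞) + Kₑ * (‖u x - u y‖₊ : ℝ≥0∞)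
          ≤ Lₑ * Nu * (Nf * edist x y ^ α) + Kₑ * (Nu * edist x y ^ α) := by
            refine add_le_add ?_ ?_
            · exact mul_le_mul' (mul_le_mul' le_rfl (hux x)) (hfsub x y hxy)
            · exact mul_le_mul' le_rfl (husub x y hxy)
        _ = ((Lₑ * Nf + Kₑ) * Nu) * edist x y ^ α := by ring
    have hfinal : holderNorm α (fun x => Φ' (g x) - Φ' (f x)) ≤ C₁ * Nu := by
      refine (holderNorm_le hsupE hholE).trans ?_
      calc Kₑ * Nu + (Lₑ * Nf + Kₑ) * Nu = (2 * Kₑ + Lₑ * Nf) * Nu := by ring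
        _ ≤ C₁ * Nu := by
            refine mul_le_mul' ?_ le_rfl
            rw [hC₁def]
            exact le_self_add
    calc holderNorm α (fun x => Φ' (g x) - Φ' (f x)) ≤ C₁ * Nu := hfinal
      _ < C₁ * min (ENNReal.ofReal c) (ε / C₁) :=
          ENNReal.mul_lt_mul_right hC₁0 hC₁t huδ
      _ ≤ C₁ * (ε / C₁) := mul_le_mul' le_rfl (min_le_right _ _)
      _ ≤ ε := ENNReal.mul_div_le
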